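/- Let n be a positive integer, λ_1,…,λ_n positive reals, τ > 0 and a > 0. If z_1 = α_1 + β·i and z_2 = α_2 + β·i with the same imaginary part β ∈ ℝ and with α_1, α_2 > 0 are both roots of the characteristic equation (z+λ_1)(z+λ_2)⋯(z+λ_n) + a·e^{−τz} = 0, then α_1 = α_2. That is, every horizontal half-line {α + βi : α > 0} contains at most one root. -/

import Mathlib

open Complex

lemma modulus_eq_aux (n : ℕ) (lam : Fin n → ℝ) (hlam : ∀ j, 0 < lam j)
    (τ a : ℝ) (ha : 0 < a) (α β : ℝ) (hα : 0 < α)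
    (h : (∏ j, (((α : ℂ) + (β : ℂ) * Complex.I) + (lam j : ℂ)))
        + (a : ℂ) * Complex.exp (-(τ : ℂ) * ((α : ℂ) + (β : ℂ) * Complex.I)) = 0) :
    (∏ j, Real.sqrt ((α + lam j)^2 + β^2)) * Real.exp (τ * α) = a := by
  have h' : (∏ j, (((α : ℂ) + (β : ℂ) * Complex.I) + (lam j : ℂ)))
      = -((a : ℂ) * Complex.exp (-(τ : ℂ) * ((α : ℂ) + (β : ℂ) * Complex.I))) := by
    linear_combination h
  have habs := congrArg (fun z : ℂ => ‖z‖) h'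
  rw [norm_neg, norm_mul, norm_prod, Complex.norm_exp] at habs
  have hre : ((-(τ : ℂ) * ((α : ℂ) + (β : ℂ) * Complex.I)).re) = -(τ * α) := by
    simp [Complex.mul_re]
  rw [hre] at habs
  have hterm : ∀ j : Fin n, ‖(((α : ℂ) + (β : ℂ) * Complex.I) + (lam j : ℂ))‖
      = Real.sqrt ((α + lam j)^2 + β^2) := by
    intro j
    have : ((α : ℂ) + (β : ℂ) * Complex.I) + (lam j : ℂ)
        = ((α + lam j : ℝ) : ℂ) + ((β : ℝ) : ℂ) * Complex.I := by push_cast; ring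
    rw [this, Complex.norm_add_mul_I]
  calc (∏ j, Real.sqrt ((α + lam j)^2 + β^2)) * Real.exp (τ * α)
      = (∏ j, ‖(((α : ℂ) + (β : ℂ) * Complex.I) + (lam j : ℂ))‖) * Real.exp (τ * α) := by
        rw [Finset.prod_congr rfl (fun j _ => (hterm j).symm)]
    _ = ‖(a : ℂ)‖ * Real.exp (-(τ * α)) * Real.exp (τ * α) := by rw [habs]
    _ = a := by
        rw [Complex.norm_real, Real.norm_eq_abs, abs_of_pos ha, mul_assoc, ← Real.exp_add]
        simp

theorem horizontal_halfline_at_most_one_root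
    (n : ℕ) (hn : 0 < n) (lam : Fin n → ℝ) (hlam : ∀ j, 0 < lam j)
    (τ a : ℝ) (hτ : 0 < τ) (ha : 0 < a)
    (α₁ α₂ β : ℝ) (hα₁ : 0 < α₁) (hα₂ : 0 < α₂)
    (h1 : (∏ j, (((α₁ : ℂ) + (β : ℂ) * Complex.I) + (lam j : ℂ)))
        + (a : ℂ) * Complex.exp (-(τ : ℂ) * ((α₁ : ℂ) + (β : ℂ) * Complex.I)) = 0)
    (h2 : (∏ j, (((α₂ : ℂ) + (β : ℂ) * Complex.I) + (lam j : ℂ)))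
        + (a : ℂ) * Complex.exp (-(τ : ℂ) * ((α₂ : ℂ) + (β : ℂ) * Complex.I)) = 0) :
    α₁ = α₂ := by
  have e1 := modulus_eq_aux n lam hlam τ a ha α₁ β hα₁ h1
  have e2 := modulus_eq_aux n lam hlam τ a ha α₂ β hα₂ h2
  -- strict monotonicity
  have key : ∀ x y : ℝ, 0 < x → 0 < y → x < y →
      (∏ j, Real.sqrt ((x + lam j)^2 + β^2)) * Real.exp (τ * x)
      < (∏ j, Real.sqrt ((y + lam j)^2 + β^2)) * Real.exp (τ * y) := by
    intro x y hx hy hxy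
    have hprod : (∏ j, Real.sqrt ((x + lam j)^2 + β^2))
        < ∏ j, Real.sqrt ((y + lam j)^2 + β^2) := by
      apply Finset.prod_lt_prod_of_nonempty
      · intro j _
        apply Real.sqrt_pos.2
        have hxl : 0 < x + lam j := by linarith [hlam j]
        nlinarith [sq_nonneg β]
      · intro j _
        apply Real.sqrt_lt_sqrt (by positivity)
        have h1 : 0 < x + lam j := by linarith [hlam j]
        have h2 : x + lam j < y + lam j := by linarith
        nlinarith
      · exact Finset.univ_nonempty_iff.2 (Fin.pos_iff_nonempty.1 hn)
    have hexp : Real.exp (τ * x) < Real.exp (τ * y) := by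
      apply Real.exp_lt_exp.2
      nlinarith
    have hpos : 0 < ∏ j : Fin n, Real.sqrt ((x + lam j)^2 + β^2) := by
      apply Finset.prod_pos
      intro j _
      apply Real.sqrt_pos.2
      have hxl : 0 < x + lam j := by linarith [hlam j]
      nlinarith [sq_nonneg β]
    exact mul_lt_mul'' hprod hexp (le_of_lt hpos) (Real.exp_pos _).le
  rcases lt_trichotomy α₁ α₂ with h | h | h
  · exfalso; have := key α₁ α₂ hα₁ hα₂ h; rw [e1, e2] at this; exact lt_irrefl a this
  · exact h
  · exfalso; have := key α₂ α₁ hα₂ hα₁ h; rw [e1, e2] at this; exact lt_irrefl a this
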